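/- For every real L ≥ 0 and every integer d ≥ 1, ∫_L^∞ e^{−x²}·x^{2d} dx ≤ e^{−L²}·(L^{2d} + (8d)^d). -/

import Mathlib

open MeasureTheory Real Set

lemma aux_le_exp (t : ℝ) : t ≤ Real.exp (t - 1) := by
  have := Real.add_one_le_exp (t - 1); linarith

lemma exp_neg_nat (d : ℕ) : Real.exp (-(d:ℝ)) = (Real.exp 1 ^ d)⁻¹ := by
  rw [Real.exp_neg, ← Real.exp_nat_mul, mul_one]

lemma aux_ptwise (d : ℕ) (hd : 1 ≤ d) (x : ℝ) :
    x ^ (2 * d) * Real.exp (-(x ^ 2) / 2) ≤ (2 * (d : ℝ) / Real.exp 1) ^ d := by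
  have hd0 : (0:ℝ) < d := by exact_mod_cast hd
  set u : ℝ := x ^ 2 / 2 with hu
  have hu0 : 0 ≤ u := by positivity
  have h1 : u / d ≤ Real.exp (u / d - 1) := aux_le_exp _
  have h2 : u ≤ d * Real.exp (u / d - 1) := by
    have := mul_le_mul_of_nonneg_left h1 hd0.le
    rwa [mul_div_cancel₀ _ hd0.ne'] at this
  have h3 : u ^ d ≤ (d : ℝ) ^ d * Real.exp (u - d) := by
    have := pow_le_pow_left₀ hu0 h2 d
    rwa [mul_pow, ← Real.exp_nat_mul, mul_sub, mul_one,
      mul_div_cancel₀ _ hd0.ne'] at this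
  have h5 : u ^ d * Real.exp (-u) ≤ (d : ℝ) ^ d * Real.exp (-(d:ℝ)) := by
    calc u ^ d * Real.exp (-u)
        ≤ ((d:ℝ) ^ d * Real.exp (u - d)) * Real.exp (-u) :=
          mul_le_mul_of_nonneg_right h3 (Real.exp_pos _).le
      _ = (d : ℝ) ^ d * Real.exp (-(d:ℝ)) := by
          rw [mul_assoc, ← Real.exp_add]; ring_nf
  have hx : x ^ (2 * d) * Real.exp (-(x ^ 2) / 2) = 2 ^ d * (u ^ d * Real.exp (-u)) := by
    rw [pow_mul]
    have : x ^ 2 = 2 * u := by rw [hu]; ring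
    rw [this]
    have : -(2 * u) / 2 = -u := by ring
    rw [this, mul_pow]; ring
  have hrhs : (2 * (d : ℝ) / Real.exp 1) ^ d = 2 ^ d * ((d:ℝ) ^ d * Real.exp (-(d:ℝ))) := by
    rw [div_pow, mul_pow, exp_neg_nat]; ring
  rw [hx, hrhs]
  have h2d : (0:ℝ) ≤ 2 ^ d := by positivity
  exact mul_le_mul_of_nonneg_left h5 h2d

lemma aux_mono (d : ℕ) (L x : ℝ) (hL : 0 ≤ L) (h2d : 2 * (d:ℝ) ≤ L ^ 2) (hx : L ≤ x) :
    x ^ (2 * d) * Real.exp (-(x ^ 2) / 2) ≤ L ^ (2 * d) * Real.exp (-(L ^ 2) / 2) := by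
  rcases Nat.eq_zero_or_pos d with rfl | hd
  · simp only [Nat.cast_zero, mul_zero, pow_zero, one_mul]
    exact Real.exp_le_exp.2 (by nlinarith)
  have hdR : (1:ℝ) ≤ d := by exact_mod_cast hd
  have hL2 : (0:ℝ) < L ^ 2 := by nlinarith
  have hLpos : 0 < L := hL.lt_of_ne (by rintro rfl; simp at hL2)
  have h1 : x ^ 2 / L ^ 2 ≤ Real.exp (x ^ 2 / L ^ 2 - 1) := aux_le_exp _
  have h2 : x ^ 2 ≤ L ^ 2 * Real.exp ((x ^ 2 - L ^ 2) / L ^ 2) := by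
    have := mul_le_mul_of_nonneg_left h1 hL2.le
    rw [mul_div_cancel₀ _ hL2.ne'] at this
    have heq : x ^ 2 / L ^ 2 - 1 = (x ^ 2 - L ^ 2) / L ^ 2 := by field_simp
    rwa [heq] at this
  have h3 : x ^ (2 * d) ≤ L ^ (2 * d) * Real.exp ((d:ℝ) * ((x ^ 2 - L ^ 2) / L ^ 2)) := by
    have hx2 : (0:ℝ) ≤ x ^ 2 := sq_nonneg x
    have := pow_le_pow_left₀ hx2 h2 d
    rw [mul_pow, ← Real.exp_nat_mul] at this
    rw [pow_mul, pow_mul]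
    exact this
  have hdiff : (0:ℝ) ≤ x ^ 2 - L ^ 2 := by nlinarith
  have h4 : (d:ℝ) * ((x ^ 2 - L ^ 2) / L ^ 2) ≤ (x ^ 2 - L ^ 2) / 2 := by
    rw [mul_div_assoc', div_le_div_iff₀ hL2 (by norm_num)]
    nlinarith
  have h5 : x ^ (2 * d) ≤ L ^ (2 * d) * Real.exp ((x ^ 2 - L ^ 2) / 2) := by
    refine h3.trans (mul_le_mul_of_nonneg_left (Real.exp_le_exp.2 h4) (by positivity))
  calc x ^ (2 * d) * Real.exp (-(x ^ 2) / 2)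
      ≤ (L ^ (2 * d) * Real.exp ((x ^ 2 - L ^ 2) / 2)) * Real.exp (-(x ^ 2) / 2) :=
        mul_le_mul_of_nonneg_right h5 (Real.exp_pos _).le
    _ = L ^ (2 * d) * Real.exp (-(L ^ 2) / 2) := by
        rw [mul_assoc, ← Real.exp_add]; ring_nf

lemma exp_half_eq : (fun x : ℝ => Real.exp (-(1/2) * x ^ 2)) = fun x => Real.exp (-(x ^ 2) / 2) := by
  funext x; congr 1; ring

lemma mul_exp_half_eq :
    (fun x : ℝ => x * Real.exp (-(1/2) * x ^ 2)) = fun x => x * Real.exp (-(x ^ 2) / 2) := by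
  funext x; congr 2; ring

lemma tail_integral (L : ℝ) :
    ∫ x in Set.Ioi L, x * Real.exp (-(x ^ 2) / 2) = Real.exp (-(L ^ 2) / 2) := by
  have hderiv : ∀ x ∈ Set.Ici L,
      HasDerivAt (fun y : ℝ => -Real.exp (-(y ^ 2) / 2)) (x * Real.exp (-(x ^ 2) / 2)) x := by
    intro x _
    have h1 : HasDerivAt (fun y : ℝ => -(y ^ 2) / 2) (-x) x := by
      have := ((hasDerivAt_pow 2 x).neg.div_const 2)
      refine this.congr_deriv ?_; simp; ring
    have := (h1.exp).neg
    refine this.congr_deriv ?_; ring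
  have hint : IntegrableOn (fun x : ℝ => x * Real.exp (-(x ^ 2) / 2)) (Set.Ioi L) := by
    have := (integrable_mul_exp_neg_mul_sq (show (0:ℝ) < 1/2 by norm_num))
    rw [mul_exp_half_eq] at this
    exact this.integrableOn
  have htend : Filter.Tendsto (fun y : ℝ => -Real.exp (-(y ^ 2) / 2)) Filter.atTop (nhds 0) := by
    rw [show (0:ℝ) = -0 by norm_num]
    apply Filter.Tendsto.neg
    apply Real.tendsto_exp_atBot.comp
    have h1 : Filter.Tendsto (fun x : ℝ => x ^ 2) Filter.atTop Filter.atTop :=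
      Filter.tendsto_pow_atTop (by norm_num)
    have h2 := Filter.tendsto_neg_atTop_atBot.comp h1
    exact Filter.Tendsto.atBot_div_const (by norm_num : (0:ℝ) < 2) h2
  have := integral_Ioi_of_hasDerivAt_of_tendsto' hderiv hint htend
  rw [this]; ring

lemma aux_numeric (d : ℕ) (hd : 1 ≤ d) :
    (2 * (d:ℝ) / Real.exp 1) ^ d * (Real.sqrt (2 * π) / 2)
      ≤ Real.exp (-(2 * (d:ℝ))) * (8 * (d:ℝ)) ^ d := by
  have hC : (0:ℝ) ≤ (2 * (d:ℝ) / Real.exp 1) ^ d := by positivity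
  have hsq : Real.sqrt (2 * π) / 2 ≤ (4 / Real.exp 1) ^ d := by
    have h4e : (1:ℝ) ≤ 4 / Real.exp 1 := by
      rw [le_div_iff₀ (Real.exp_pos 1)]
      nlinarith [Real.exp_one_lt_d9]
    have hbase : Real.sqrt (2 * π) / 2 ≤ 4 / Real.exp 1 := by
      rw [div_le_iff₀ (show (0:ℝ) < 2 by norm_num)]
      rw [show (4:ℝ) / Real.exp 1 * 2 = 8 / Real.exp 1 by ring]
      rw [Real.sqrt_le_iff]
      have he : Real.exp 1 ≤ 2.7182818286 := (Real.exp_one_lt_d9).le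
      have he2 : Real.exp 1 ^ 2 ≤ 7.3891 := by nlinarith [Real.exp_pos 1]
      constructor
      · positivity
      · rw [div_pow, le_div_iff₀ (by positivity : (0:ℝ) < Real.exp 1 ^ 2)]
        nlinarith [Real.pi_pos, Real.pi_lt_d2, he2]
    exact hbase.trans (le_self_pow₀ h4e (Nat.one_le_iff_ne_zero.1 hd))
  calc (2 * (d:ℝ) / Real.exp 1) ^ d * (Real.sqrt (2 * π) / 2)
      ≤ (2 * (d:ℝ) / Real.exp 1) ^ d * (4 / Real.exp 1) ^ d :=
        mul_le_mul_of_nonneg_left hsq hC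
    _ = Real.exp (-(2 * (d:ℝ))) * (8 * (d:ℝ)) ^ d := by
        rw [← mul_pow]
        have hE : (0:ℝ) < Real.exp 1 := Real.exp_pos 1
        have hexp : Real.exp (-(2 * (d:ℝ))) = (Real.exp 1 ^ (2 * d))⁻¹ := by
          rw [show (2 * (d:ℝ)) = ((2 * d : ℕ) : ℝ) by push_cast; ring, exp_neg_nat]
        rw [hexp, pow_mul]
        rw [show 2 * (d:ℝ) / Real.exp 1 * (4 / Real.exp 1)
          = 8 * (d:ℝ) / Real.exp 1 ^ 2 by ring]
        rw [div_pow]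
        field_simp

set_option maxHeartbeats 1000000 in
theorem stmt_13 (L : ℝ) (hL : 0 ≤ L) (d : ℕ) (hd : 1 ≤ d) :
    ∫ x in Set.Ici L, Real.exp (-x ^ 2) * x ^ (2 * d) ≤
      Real.exp (-L ^ 2) * (L ^ (2 * d) + (8 * (d : ℝ)) ^ d) := by
  have hd0 : (0:ℝ) < d := by exact_mod_cast hd
  have hC : (0:ℝ) ≤ (2 * (d:ℝ) / Real.exp 1) ^ d := by positivity
  have hsplit : ∀ x : ℝ, Real.exp (-x ^ 2) * x ^ (2 * d)
      = (x ^ (2 * d) * Real.exp (-(x ^ 2) / 2)) * Real.exp (-(x ^ 2) / 2) := by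
    intro x
    rw [mul_assoc, ← Real.exp_add]
    ring_nf
  have hxnn : ∀ x : ℝ, (0:ℝ) ≤ x ^ (2 * d) := by
    intro x; rw [pow_mul]; positivity
  have hfnn : ∀ x : ℝ, (0:ℝ) ≤ Real.exp (-x ^ 2) * x ^ (2 * d) := fun x =>
    mul_nonneg (Real.exp_pos _).le (hxnn x)
  have hbound : ∀ x : ℝ, Real.exp (-x ^ 2) * x ^ (2 * d)
      ≤ (2 * (d:ℝ) / Real.exp 1) ^ d * Real.exp (-(x ^ 2) / 2) := by
    intro x
    rw [hsplit x]
    exact mul_le_mul_of_nonneg_right (aux_ptwise d hd x) (Real.exp_pos _).le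
  have hgauss : Integrable (fun x : ℝ => Real.exp (-(x ^ 2) / 2)) := by
    have := integrable_exp_neg_mul_sq (show (0:ℝ) < 1/2 by norm_num)
    rwa [exp_half_eq] at this
  have hint : Integrable (fun x : ℝ => Real.exp (-x ^ 2) * x ^ (2 * d)) := by
    apply Integrable.mono' (hgauss.const_mul ((2 * (d:ℝ) / Real.exp 1) ^ d))
    · exact (Continuous.mul (by continuity) (by continuity)).aestronglyMeasurable
    · filter_upwards with x
      rw [Real.norm_eq_abs, abs_of_nonneg (hfnn x)]
      exact hbound x
  rcases le_or_gt (2 * (d:ℝ)) (L ^ 2) with hcase | hcase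
  · -- Case 1: L² ≥ 2d
    have hdR : (1:ℝ) ≤ d := by exact_mod_cast hd
    have hL1 : (1:ℝ) ≤ L := by nlinarith [mul_nonneg hL hL]
    have hLpos : (0:ℝ) < L := lt_of_lt_of_le one_pos hL1
    set C : ℝ := L ^ (2 * d) * Real.exp (-(L ^ 2) / 2) / L with hCdef
    have hCnn : 0 ≤ C := by
      apply div_nonneg _ hLpos.le
      exact mul_nonneg (hxnn L) (Real.exp_pos _).le
    have hmono : ∀ x ∈ Set.Ici L, Real.exp (-x ^ 2) * x ^ (2 * d)
        ≤ C * (x * Real.exp (-(x ^ 2) / 2)) := by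
      intro x hx
      have hx' : L ≤ x := hx
      have h1 := aux_mono d L x hL hcase hx'
      calc Real.exp (-x ^ 2) * x ^ (2 * d)
          = (x ^ (2 * d) * Real.exp (-(x ^ 2) / 2)) * Real.exp (-(x ^ 2) / 2) := hsplit x
        _ ≤ (L ^ (2 * d) * Real.exp (-(L ^ 2) / 2)) * Real.exp (-(x ^ 2) / 2) :=
            mul_le_mul_of_nonneg_right h1 (Real.exp_pos _).le
        _ ≤ (L ^ (2 * d) * Real.exp (-(L ^ 2) / 2)) * ((x / L) * Real.exp (-(x ^ 2) / 2)) := by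
            apply mul_le_mul_of_nonneg_left _ (mul_nonneg (hxnn L) (Real.exp_pos _).le)
            have h2 : (1:ℝ) ≤ x / L := (one_le_div hLpos).2 hx'
            nlinarith [Real.exp_pos (-(x ^ 2) / 2)]
        _ = C * (x * Real.exp (-(x ^ 2) / 2)) := by
            rw [hCdef]; field_simp
    have hgint : IntegrableOn (fun x : ℝ => C * (x * Real.exp (-(x ^ 2) / 2)))
        (Set.Ici L) := by
      have := integrable_mul_exp_neg_mul_sq (show (0:ℝ) < 1/2 by norm_num)
      rw [mul_exp_half_eq] at this
      exact (this.const_mul C).integrableOn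
    have hstep := setIntegral_mono_on hint.integrableOn hgint measurableSet_Ici hmono
    have hcomp : ∫ x in Set.Ici L, C * (x * Real.exp (-(x ^ 2) / 2))
        = C * Real.exp (-(L ^ 2) / 2) := by
      rw [integral_const_mul, MeasureTheory.integral_Ici_eq_integral_Ioi,
        tail_integral]
    rw [hcomp] at hstep
    refine hstep.trans ?_
    have e2 : Real.exp (-L ^ 2) = Real.exp (-(L ^ 2) / 2) * Real.exp (-(L ^ 2) / 2) := by
      rw [← Real.exp_add]; ring_nf
    have heq : C * Real.exp (-(L ^ 2) / 2) = L ^ (2 * d) * Real.exp (-L ^ 2) / L := by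
      rw [hCdef, e2]; ring
    rw [heq]
    calc L ^ (2 * d) * Real.exp (-L ^ 2) / L ≤ L ^ (2 * d) * Real.exp (-L ^ 2) :=
          div_le_self (mul_nonneg (hxnn L) (Real.exp_pos _).le) hL1
      _ ≤ Real.exp (-L ^ 2) * (L ^ (2 * d) + (8 * (d:ℝ)) ^ d) := by
          have h8 : (0:ℝ) ≤ (8 * (d:ℝ)) ^ d := by positivity
          nlinarith [Real.exp_pos (-L ^ 2)]
  · -- Case 2: L² < 2d
    have hmono2 : ∀ x ∈ Set.Ici L, Real.exp (-x ^ 2) * x ^ (2 * d)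
        ≤ (2 * (d:ℝ) / Real.exp 1) ^ d * Real.exp (-(x ^ 2) / 2) := fun x _ => hbound x
    have hgint2 : IntegrableOn
        (fun x : ℝ => (2 * (d:ℝ) / Real.exp 1) ^ d * Real.exp (-(x ^ 2) / 2))
        (Set.Ici L) := (hgauss.const_mul _).integrableOn
    have hstep := setIntegral_mono_on hint.integrableOn hgint2 measurableSet_Ici hmono2
    refine hstep.trans ?_
    rw [integral_const_mul]
    have hsub : ∫ x in Set.Ici L, Real.exp (-(x ^ 2) / 2)
        ≤ ∫ x in Set.Ici (0:ℝ), Real.exp (-(x ^ 2) / 2) := by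
      apply setIntegral_mono_set hgauss.integrableOn
      · filter_upwards with x using (Real.exp_pos _).le
      · exact HasSubset.Subset.eventuallyLE (Set.Ici_subset_Ici.2 hL)
    have hval : ∫ x in Set.Ici (0:ℝ), Real.exp (-(x ^ 2) / 2) = Real.sqrt (2 * π) / 2 := by
      rw [MeasureTheory.integral_Ici_eq_integral_Ioi, ← exp_half_eq,
        integral_gaussian_Ioi]
      norm_num
      ring
    rw [hval] at hsub
    have step2 : (2 * (d:ℝ) / Real.exp 1) ^ d * (Real.sqrt (2 * π) / 2)
        ≤ Real.exp (-(2 * (d:ℝ))) * (8 * (d:ℝ)) ^ d := aux_numeric d hd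
    have step3 : Real.exp (-(2 * (d:ℝ))) * (8 * (d:ℝ)) ^ d
        ≤ Real.exp (-L ^ 2) * (L ^ (2 * d) + (8 * (d:ℝ)) ^ d) := by
      have h1 : Real.exp (-(2 * (d:ℝ))) ≤ Real.exp (-L ^ 2) :=
        Real.exp_le_exp.2 (by linarith)
      have h2 : (0:ℝ) ≤ (8 * (d:ℝ)) ^ d := by positivity
      have h3 : (0:ℝ) ≤ L ^ (2 * d) := hxnn L
      nlinarith [Real.exp_pos (-L ^ 2)]
    calc (2 * (d:ℝ) / Real.exp 1) ^ d * ∫ x in Set.Ici L, Real.exp (-(x ^ 2) / 2)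
        ≤ (2 * (d:ℝ) / Real.exp 1) ^ d * (Real.sqrt (2 * π) / 2) :=
          mul_le_mul_of_nonneg_left hsub hC
      _ ≤ Real.exp (-(2 * (d:ℝ))) * (8 * (d:ℝ)) ^ d := step2
      _ ≤ _ := step3
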